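/- Let Ξ̃ ⊂ ℝ^d be an open convex set whose characteristic cone cc_{Ξ̃} has nonempty interior. Let Ξ ⊂ ℝ^d be an open connected set such that x₁ + Ξ̃ ⊂ Ξ ⊂ x₀ + Ξ̃ for some points x₀, x₁ ∈ ℝ^d. Then Ξ − Ξ = ℝ^d. -/

import Mathlib

open MeasureTheory Set Pointwise
open scoped ENNReal

noncomputable section

abbrev Ed (d : ℕ) := EuclideanSpace ℝ (Fin d)

def charCone {d : ℕ} (Ω : Set (Ed d)) : Set (Ed d) :=
  {x | ∀ t : ℝ, 0 < t → ∀ p ∈ Ω, p + t • x ∈ Ω}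

/-- if `Ξ̃` is open convex with recession cone having nonempty interior and
`x₁ + Ξ̃ ⊆ Ξ ⊆ x₀ + Ξ̃`, then `Ξ − Ξ = ℝ^d`. -/
theorem stmt4 {d : ℕ} (Ξt Ξ : Set (Ed d))
    (hconv : Convex ℝ Ξt) (hopen : IsOpen Ξt)
    (hcc : (interior (charCone Ξt)).Nonempty)
    (hΞo : IsOpen Ξ) (hΞc : IsConnected Ξ)
    (x₀ x₁ : Ed d) (h1 : x₁ +ᵥ Ξt ⊆ Ξ) (h0 : Ξ ⊆ x₀ +ᵥ Ξt) :
    Ξ - Ξ = (univ : Set (Ed d)) := by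
  obtain ⟨v, hv⟩ := hcc
  rw [mem_interior_iff_mem_nhds, Metric.mem_nhds_iff] at hv
  obtain ⟨ε, hε, hball⟩ := hv
  obtain ⟨y, hy⟩ := hΞc.nonempty
  obtain ⟨q, hq, hqy⟩ := h0 hy
  have hvcone : v ∈ charCone Ξt := hball (Metric.mem_ball_self hε)
  ext z
  simp only [mem_univ, iff_true, mem_sub]
  set t : ℝ := ‖z‖ / ε + 1 with ht
  have htpos : 0 < t := by positivity
  have htne : t ≠ 0 := ne_of_gt htpos
  have hmem : v + t⁻¹ • z ∈ charCone Ξt := by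
    apply hball
    rw [Metric.mem_ball, dist_self_add_left, norm_smul, norm_inv, Real.norm_eq_abs,
      abs_of_pos htpos, inv_mul_lt_iff₀ htpos]
    have : t * ε = ‖z‖ + ε := by rw [ht, add_mul, div_mul_cancel₀ _ hε.ne', one_mul]
    rw [this]; linarith
  have hx : t • v + z ∈ charCone Ξt := by
    intro s hs p hp
    have h := hmem (s * t) (by positivity) p hp
    have heq : (s * t) • (v + t⁻¹ • z) = s • (t • v + z) := by
      rw [smul_add, smul_add, smul_smul, smul_smul]
      congr 1
      congr 1
      field_simp
    rwa [heq] at h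
  refine ⟨x₁ + (q + (t • v + z)), ?_, x₁ + (q + t • v), ?_, by abel⟩
  · apply h1
    have : q + (t • v + z) ∈ Ξt := by
      have := hx 1 one_pos q hq
      rwa [one_smul] at this
    exact ⟨q + (t • v + z), this, rfl⟩
  · apply h1
    exact ⟨q + t • v, hvcone t htpos q hq, rfl⟩
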